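/- Let μ be a compactly supported probability measure on ℝ^d and Σ a symmetric positive definite d×d matrix. Define p(x) := ∫ exp(−(1/2)(x − y)ᵀ Σ⁻¹ (x − y)) dμ(y), and for each x ∈ ℝ^d let μ_x be the probability measure with density proportional to exp(−(1/2)(x − y)ᵀ Σ⁻¹ (x − y)) with respect to μ. Then for every x ∈ ℝ^d the Hessian of log p satisfies ∇² log p(x) = Σ⁻¹ (Cov(μ_x) Σ⁻¹ − I), where Cov(μ_x) = E_{μ_x}[y yᵀ] − E_{μ_x}[y] E_{μ_x}[y]ᵀ is the covariance matrix of μ_x. In particular, in the isotropic case Σ = δ·I with δ > 0, ∇² log p(x) = δ⁻² Cov(μ_x) − δ⁻¹ I. -/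

import Mathlib

open MeasureTheory Set Matrix

noncomputable section

/-- The (unnormalized) Gaussian-mixture density `p(x) = ∫ exp(-½(x-y)ᵀΣ⁻¹(x-y)) dμ(y)`. -/
def gmP {d : ℕ} (μ : Measure (Fin d → ℝ)) (S : Matrix (Fin d) (Fin d) ℝ)
    (x : Fin d → ℝ) : ℝ :=
  ∫ y, Real.exp (-(1/2) * ((x - y) ⬝ᵥ (S⁻¹ *ᵥ (x - y)))) ∂μ

/-- The tilted mixing measure `μ_x`, with density proportional to
`exp(-½(x-y)ᵀΣ⁻¹(x-y))` with respect to `μ`. -/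
def gmTilt {d : ℕ} (μ : Measure (Fin d → ℝ)) (S : Matrix (Fin d) (Fin d) ℝ)
    (x : Fin d → ℝ) : Measure (Fin d → ℝ) :=
  ((μ.withDensity fun y =>
      ENNReal.ofReal (Real.exp (-(1/2) * ((x - y) ⬝ᵥ (S⁻¹ *ᵥ (x - y)))))) univ)⁻¹ •
    μ.withDensity fun y =>
      ENNReal.ofReal (Real.exp (-(1/2) * ((x - y) ⬝ᵥ (S⁻¹ *ᵥ (x - y)))))

/-- Entries of the covariance matrix of a measure on `ℝ^d`. -/
def covE {d : ℕ} (μ : Measure (Fin d → ℝ)) (i j : Fin d) : ℝ :=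
  (∫ y, y i * y j ∂μ) - (∫ y, y i ∂μ) * (∫ y, y j ∂μ)

/-- The covariance matrix of a measure on `ℝ^d`. -/
def covM {d : ℕ} (μ : Measure (Fin d → ℝ)) : Matrix (Fin d) (Fin d) ℝ :=
  Matrix.of fun i j => covE μ i j


/-! Auxiliary lemmas -/


def dotCLM {d : ℕ} (w : Fin d → ℝ) : (Fin d → ℝ) →L[ℝ] ℝ :=
  ∑ i, w i • ContinuousLinearMap.proj i

lemma dotCLM_apply {d : ℕ} (w v : Fin d → ℝ) : dotCLM w v = w ⬝ᵥ v := by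
  simp [dotCLM, dotProduct, ContinuousLinearMap.sum_apply]

lemma continuous_dotCLM (d : ℕ) : Continuous fun w : Fin d → ℝ => dotCLM w := by
  unfold dotCLM
  exact continuous_finset_sum _ fun i _ => ((continuous_apply i)).smul continuous_const

lemma continuous_mulVecFun {d : ℕ} (A : Matrix (Fin d) (Fin d) ℝ) :
    Continuous fun z : Fin d → ℝ => A *ᵥ z := by
  refine continuous_pi fun i => ?_
  have : (fun z : Fin d → ℝ => (A *ᵥ z) i) = fun z => dotCLM (A i) z := by
    funext z; simp [dotCLM_apply, Matrix.mulVec, dotProduct]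
  rw [show (fun z : Fin d → ℝ => (A *ᵥ z) i) = fun z => dotCLM (A i) z from this]
  exact (dotCLM (A i)).continuous

lemma continuous_quadFun {d : ℕ} (A : Matrix (Fin d) (Fin d) ℝ) :
    Continuous fun z : Fin d → ℝ => z ⬝ᵥ (A *ᵥ z) := by
  have : (fun z : Fin d → ℝ => z ⬝ᵥ (A *ᵥ z)) = fun z => ∑ i, z i * (A *ᵥ z) i := by
    funext z; simp [dotProduct]
  rw [this]
  exact continuous_finset_sum _ fun i _ =>
    (continuous_apply i).mul ((continuous_apply i).comp (continuous_mulVecFun A))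

lemma hasFDerivAt_quad {d : ℕ} (A : Matrix (Fin d) (Fin d) ℝ) (hA : Aᵀ = A) (z : Fin d → ℝ) :
    HasFDerivAt (fun z : Fin d → ℝ => z ⬝ᵥ (A *ᵥ z)) ((2:ℝ) • dotCLM (A *ᵥ z)) z := by
  have h : ∀ i : Fin d, HasFDerivAt (fun z : Fin d → ℝ => z i * (A *ᵥ z) i)
      (z i • dotCLM (A i) + (A *ᵥ z) i • (ContinuousLinearMap.proj i)) z := by
    intro i
    have h1 : HasFDerivAt (fun z : Fin d → ℝ => z i)
        (ContinuousLinearMap.proj i : (Fin d → ℝ) →L[ℝ] ℝ) z :=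
      (ContinuousLinearMap.proj i : (Fin d → ℝ) →L[ℝ] ℝ).hasFDerivAt
    have h2 : HasFDerivAt (fun z : Fin d → ℝ => (A *ᵥ z) i) (dotCLM (A i)) z := by
      have : (fun z : Fin d → ℝ => (A *ᵥ z) i) = fun z => dotCLM (A i) z := by
        funext z; simp [dotCLM_apply, Matrix.mulVec, dotProduct]
      rw [this]
      exact (dotCLM (A i)).hasFDerivAt
    exact h1.mul h2
  have hsum := HasFDerivAt.fun_sum (fun i (_ : i ∈ Finset.univ) => h i)
  have heq : (fun z : Fin d → ℝ => z ⬝ᵥ (A *ᵥ z)) =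
      fun z : Fin d → ℝ => ∑ i, z i * (A *ᵥ z) i := by
    funext z; simp [dotProduct]
  rw [heq]
  refine hsum.congr_fderiv (Eq.symm ?_)
  ext v
  simp only [ContinuousLinearMap.smul_apply, ContinuousLinearMap.sum_apply,
    ContinuousLinearMap.add_apply, ContinuousLinearMap.proj_apply, dotCLM_apply, smul_eq_mul]
  have key : ∑ i, z i * (A i ⬝ᵥ v) = (A *ᵥ z) ⬝ᵥ v := by
    simp only [dotProduct, Matrix.mulVec, Finset.mul_sum, Finset.sum_mul]
    rw [Finset.sum_comm]
    refine Finset.sum_congr rfl fun k _ => Finset.sum_congr rfl fun i _ => ?_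
    have : A k i = A i k := by nth_rewrite 1 [← hA]; rw [Matrix.transpose_apply]
    ring_nf
    rw [this]
    ring
  rw [Finset.sum_add_distrib, key]
  have : ∑ i, (A *ᵥ z) i * v i = (A *ᵥ z) ⬝ᵥ v := rfl
  rw [this]; ring

lemma ae_mem_of_compl_null {α : Type*} [MeasurableSpace α] {μ : Measure α} {K : Set α}
    (hμK : μ Kᶜ = 0) : ∀ᵐ y ∂μ, y ∈ K := by
  rw [MeasureTheory.ae_iff]
  simpa [Set.compl_def] using hμK

lemma integrable_cs {d : ℕ} {μ : Measure (Fin d → ℝ)} [IsFiniteMeasure μ]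
    {K : Set (Fin d → ℝ)} (hK : IsCompact K) (hμK : μ Kᶜ = 0)
    {E : Type*} [NormedAddCommGroup E] {f : (Fin d → ℝ) → E} (hf : Continuous f) :
    Integrable f μ := by
  obtain ⟨C, hC⟩ := hK.exists_bound_of_continuousOn hf.continuousOn
  refine Integrable.mono' (integrable_const C) hf.aestronglyMeasurable ?_
  filter_upwards [ae_mem_of_compl_null hμK] with y hy
  exact hC y hy

lemma hasFDerivAt_integral_cs {d : ℕ} (μ : Measure (Fin d → ℝ)) [IsFiniteMeasure μ]
    {K : Set (Fin d → ℝ)} (hK : IsCompact K) (hμK : μ Kᶜ = 0)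
    (F : (Fin d → ℝ) → (Fin d → ℝ) → ℝ)
    (F' : (Fin d → ℝ) → (Fin d → ℝ) → ((Fin d → ℝ) →L[ℝ] ℝ))
    (hFc : ∀ x, Continuous (F x))
    (hF'c : Continuous fun q : (Fin d → ℝ) × (Fin d → ℝ) => F' q.1 q.2)
    (hdiff : ∀ x y, HasFDerivAt (fun x => F x y) (F' x y) x) (x₀ : Fin d → ℝ) :
    HasFDerivAt (fun x => ∫ y, F x y ∂μ) (∫ y, F' x₀ y ∂μ) x₀ ∧ Integrable (F' x₀) μ := by
  obtain ⟨C, hC⟩ := ((isCompact_closedBall x₀ 1).prod hK).exists_bound_of_continuousOn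
    hF'c.continuousOn
  have hF'm : AEStronglyMeasurable (F' x₀) μ :=
    (hF'c.comp (continuous_const.prodMk continuous_id)).aestronglyMeasurable
  have h_bound : ∀ᵐ y ∂μ, ∀ x ∈ Metric.ball x₀ 1, ‖F' x y‖ ≤ C := by
    filter_upwards [ae_mem_of_compl_null hμK] with y hy
    intro x hx
    exact hC (x, y) (Set.mk_mem_prod (Metric.ball_subset_closedBall hx) hy)
  have hint : Integrable (F' x₀) μ := by
    refine Integrable.mono' (integrable_const C) hF'm ?_
    filter_upwards [h_bound] with y hy
    exact hy x₀ (Metric.mem_ball_self one_pos)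
  refine ⟨hasFDerivAt_integral_of_dominated_of_fderiv_le (Metric.ball_mem_nhds x₀ one_pos)
    (Filter.Eventually.of_forall fun x => (hFc x).aestronglyMeasurable)
    (integrable_cs hK hμK (hFc x₀)) hF'm h_bound (integrable_const C)
    (Filter.Eventually.of_forall fun y x hx => hdiff x y), hint⟩

lemma key_alg {d : ℕ} (P : ℝ) (hP : P ≠ 0) (Ai Aj xv u : Fin d → ℝ)
    (B w : Fin d → Fin d → ℝ)
    (hB : ∀ m l, B m l = xv m * xv l * P - xv m * u l - xv l * u m + w m l) :
    P⁻¹ * (∑ m, ∑ l, Ai m * Aj l * B m l)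
      - (P^2)⁻¹ * ((∑ m, Ai m * (xv m * P - u m)) * (∑ l, Aj l * (xv l * P - u l)))
    = ∑ m, ∑ l, Ai m * (P⁻¹ * w m l - P⁻¹ * u m * (P⁻¹ * u l)) * Aj l := by
  rw [Finset.sum_mul_sum]
  simp only [Finset.mul_sum]
  rw [← Finset.sum_sub_distrib]
  refine Finset.sum_congr rfl fun m _ => ?_
  rw [← Finset.sum_sub_distrib]
  refine Finset.sum_congr rfl fun l _ => ?_
  rw [hB m l]
  field_simp
  ring

/-! Gaussian kernel and its derivatives -/

def gmG {d : ℕ} (S : Matrix (Fin d) (Fin d) ℝ) (x y : Fin d → ℝ) : ℝ :=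
  Real.exp (-(1/2) * ((x - y) ⬝ᵥ (S⁻¹ *ᵥ (x - y))))

lemma gmP_eq {d : ℕ} (μ : Measure (Fin d → ℝ)) (S : Matrix (Fin d) (Fin d) ℝ)
    (x : Fin d → ℝ) : gmP μ S x = ∫ y, gmG S x y ∂μ := rfl

lemma continuous_gmG_pair {d : ℕ} (S : Matrix (Fin d) (Fin d) ℝ) :
    Continuous fun q : (Fin d → ℝ) × (Fin d → ℝ) => gmG S q.1 q.2 :=
  Real.continuous_exp.comp (continuous_const.mul
    ((continuous_quadFun S⁻¹).comp (continuous_fst.sub continuous_snd)))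

lemma continuous_gmG {d : ℕ} (S : Matrix (Fin d) (Fin d) ℝ) (x : Fin d → ℝ) :
    Continuous (gmG S x) :=
  Real.continuous_exp.comp (continuous_const.mul
    ((continuous_quadFun S⁻¹).comp (continuous_const.sub continuous_id)))

lemma gmP_pos {d : ℕ} (μ : Measure (Fin d → ℝ)) [IsProbabilityMeasure μ]
    {K : Set (Fin d → ℝ)} (hK : IsCompact K) (hμK : μ Kᶜ = 0)
    (S : Matrix (Fin d) (Fin d) ℝ) (x : Fin d → ℝ) : 0 < gmP μ S x := by
  have hgpos : ∀ y, 0 < gmG S x y := fun y => Real.exp_pos _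
  rw [gmP_eq, integral_pos_iff_support_of_nonneg (fun y => (hgpos y).le)
    (integrable_cs hK hμK (continuous_gmG S x))]
  have : Function.support (gmG S x) = Set.univ := by
    ext y; simp [Function.support, (hgpos y).ne']
  rw [this]
  simp

lemma tilt_integral {d : ℕ} (μ : Measure (Fin d → ℝ)) [IsProbabilityMeasure μ]
    {K : Set (Fin d → ℝ)} (hK : IsCompact K) (hμK : μ Kᶜ = 0)
    (S : Matrix (Fin d) (Fin d) ℝ) (x : Fin d → ℝ)
    (f : (Fin d → ℝ) → ℝ) (hf : Continuous f) :
    ∫ y, f y ∂(gmTilt μ S x) = (gmP μ S x)⁻¹ * ∫ y, f y * gmG S x y ∂μ := by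
  have hgc : Continuous (gmG S x) := continuous_gmG S x
  have hgint : Integrable (gmG S x) μ := integrable_cs hK hμK hgc
  have hgpos : ∀ y, 0 < gmG S x y := fun y => Real.exp_pos _
  have hPpos : 0 < gmP μ S x := gmP_pos μ hK hμK S x
  have hmass : (μ.withDensity fun y => ENNReal.ofReal (gmG S x y)) Set.univ
      = ENNReal.ofReal (gmP μ S x) := by
    rw [withDensity_apply _ MeasurableSet.univ, Measure.restrict_univ,
      ← ofReal_integral_eq_lintegral_ofReal hgint
        (Filter.Eventually.of_forall fun y => (hgpos y).le)]
    rfl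
  have hwd : ∫ y, f y ∂(μ.withDensity fun y => ENNReal.ofReal (gmG S x y))
      = ∫ y, f y * gmG S x y ∂μ := by
    have hco : (fun y => ENNReal.ofReal (gmG S x y))
        = fun y => ((Real.toNNReal (gmG S x y) : ENNReal)) := rfl
    rw [hco, integral_withDensity_eq_integral_smul (hgc.measurable.real_toNNReal) f]
    refine integral_congr_ae (Filter.Eventually.of_forall fun y => ?_)
    simp [NNReal.smul_def, Real.coe_toNNReal _ (hgpos y).le, mul_comm]
  show ∫ y, f y ∂((((μ.withDensity fun y => ENNReal.ofReal (gmG S x y))) Set.univ)⁻¹ •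
      (μ.withDensity fun y => ENNReal.ofReal (gmG S x y))) = _
  rw [hmass, integral_smul_measure, hwd, ENNReal.toReal_inv,
    ENNReal.toReal_ofReal hPpos.le, smul_eq_mul]

/-- First-order derivative integrand. -/
def gmF1' {d : ℕ} (S : Matrix (Fin d) (Fin d) ℝ) (x y : Fin d → ℝ) :
    (Fin d → ℝ) →L[ℝ] ℝ :=
  (-(gmG S x y)) • dotCLM (S⁻¹ *ᵥ (x - y))

/-- Second-order derivative integrand. -/
def gmF2' {d : ℕ} (S : Matrix (Fin d) (Fin d) ℝ) (j : Fin d) (x y : Fin d → ℝ) :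
    (Fin d → ℝ) →L[ℝ] ℝ :=
  (-((S⁻¹ *ᵥ (x - y)) j)) • gmF1' S x y + gmG S x y • (-(dotCLM (S⁻¹ j)))

lemma final_combine {d : ℕ} (P : ℝ) (hP : P ≠ 0) (Ai Aj xv u : Fin d → ℝ) (Aij : ℝ)
    (B w : Fin d → Fin d → ℝ)
    (hB : ∀ m l, B m l = xv m * xv l * P - xv m * u l - xv l * u m + w m l) :
    P⁻¹ * ((∑ m, ∑ l, Ai m * Aj l * B m l) - Aij * P) +
      (-(∑ l, Aj l * (xv l * P - u l))) *
        (-(P ^ 2)⁻¹ * (-(∑ m, Ai m * (xv m * P - u m)))) =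
    (∑ m, ∑ l, Ai m * (P⁻¹ * w m l - P⁻¹ * u m * (P⁻¹ * u l)) * Aj l) - Aij := by
  linear_combination key_alg P hP Ai Aj xv u B w hB - Aij * inv_mul_cancel₀ hP


/-- **Hessian of a Gaussian-mixture log-density.**  For a compactly supported mixing measure
`μ` and symmetric positive definite `Σ`,
`∇² log p(x) = Σ⁻¹ (Cov(μ_x) Σ⁻¹ - I)`; in particular, for isotropic `Σ = δ·I`,
`∇² log p(x) = δ⁻² Cov(μ_x) - δ⁻¹ I`. -/
theorem gaussian_mixture_hessian
    (d : ℕ) (μ : Measure (Fin d → ℝ)) [IsProbabilityMeasure μ]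
    (hsupp : ∃ K : Set (Fin d → ℝ), IsCompact K ∧ μ Kᶜ = 0)
    (S : Matrix (Fin d) (Fin d) ℝ) (hS : S.PosDef) :
    (∀ (x : Fin d → ℝ) (i j : Fin d),
      fderiv ℝ (fun y => fderiv ℝ (fun z => Real.log (gmP μ S z)) y (Pi.single j 1)) x
          (Pi.single i 1) =
        (S⁻¹ * (covM (gmTilt μ S x) * S⁻¹ - 1)) i j) ∧
    (∀ δ : ℝ, 0 < δ → S = δ • (1 : Matrix (Fin d) (Fin d) ℝ) →
      ∀ (x : Fin d → ℝ) (i j : Fin d),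
        fderiv ℝ (fun y => fderiv ℝ (fun z => Real.log (gmP μ S z)) y (Pi.single j 1)) x
            (Pi.single i 1) =
          δ⁻¹ * δ⁻¹ * covE (gmTilt μ S x) i j - (if i = j then δ⁻¹ else 0)) := by
  classical
  obtain ⟨K, hK, hμK⟩ := hsupp
  have hApd : (S⁻¹).PosDef := Matrix.posDef_inv_iff.mpr hS
  have hsymm : ∀ a b : Fin d, S⁻¹ a b = S⁻¹ b a := by
    intro a b
    have h := hApd.1
    calc S⁻¹ a b = (S⁻¹)ᴴ a b := by rw [h]
      _ = S⁻¹ b a := by simp [Matrix.conjTranspose_apply]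
  have hAt : (S⁻¹)ᵀ = S⁻¹ := by
    ext a b; rw [Matrix.transpose_apply, hsymm b a]
  -- derivative of the kernel
  have hdiff1 : ∀ x y : Fin d → ℝ, HasFDerivAt (fun x => gmG S x y) (gmF1' S x y) x := by
    intro x y
    have hsub : HasFDerivAt (fun x : Fin d → ℝ => x - y)
        (ContinuousLinearMap.id ℝ (Fin d → ℝ)) x := (hasFDerivAt_id x).sub_const y
    have h0 : HasFDerivAt (fun x : Fin d → ℝ => (x - y) ⬝ᵥ (S⁻¹ *ᵥ (x - y)))
        ((2:ℝ) • dotCLM (S⁻¹ *ᵥ (x - y))) x := by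
      have := (hasFDerivAt_quad S⁻¹ hAt (x - y)).comp x hsub
      simpa only [ContinuousLinearMap.comp_id, Function.comp_def] using this
    have h1 := (h0.const_mul (-(1/2))).exp
    have h2 : gmF1' S x y =
        Real.exp (-(1/2) * ((x - y) ⬝ᵥ (S⁻¹ *ᵥ (x - y)))) •
          ((-(1/2) : ℝ) • ((2:ℝ) • dotCLM (S⁻¹ *ᵥ (x - y)))) := by
      ext v
      simp only [gmF1', gmG, ContinuousLinearMap.smul_apply, smul_eq_mul, dotCLM_apply]
      ring
    rw [show (fun x : Fin d → ℝ => gmG S x y)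
      = fun x : Fin d → ℝ => Real.exp (-(1/2) * ((x - y) ⬝ᵥ (S⁻¹ *ᵥ (x - y)))) from rfl, h2]
    exact h1
  have hF1c : Continuous fun q : (Fin d → ℝ) × (Fin d → ℝ) => gmF1' S q.1 q.2 := by
    simp only [gmF1']
    exact ((continuous_gmG_pair S).neg).smul
      ((continuous_dotCLM d).comp ((continuous_mulVecFun S⁻¹).comp
        (continuous_fst.sub continuous_snd)))
  have H1 := fun x => hasFDerivAt_integral_cs μ hK hμK (fun x y => gmG S x y)
    (fun x y => gmF1' S x y) (fun x => continuous_gmG S x) hF1c hdiff1 x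
  have hPne : ∀ x : Fin d → ℝ, (∫ y, gmG S x y ∂μ) ≠ 0 :=
    fun x => (gmP_pos μ hK hμK S x).ne'
  have hlog : ∀ x : Fin d → ℝ, HasFDerivAt (fun z => Real.log (gmP μ S z))
      ((∫ y, gmG S x y ∂μ)⁻¹ • ∫ y, gmF1' S x y ∂μ) x :=
    fun x => HasFDerivAt.log (H1 x).1 (hPne x)
  -- value of the inner derivative
  have inner_eq : ∀ (j : Fin d) (x : Fin d → ℝ),
      fderiv ℝ (fun z => Real.log (gmP μ S z)) x (Pi.single j 1)
        = (∫ y, gmG S x y ∂μ)⁻¹ * ∫ y, -((S⁻¹ *ᵥ (x - y)) j) * gmG S x y ∂μ := by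
    intro j x
    rw [(hlog x).fderiv, ContinuousLinearMap.smul_apply, smul_eq_mul]
    congr 1
    rw [ContinuousLinearMap.integral_apply (H1 x).2]
    refine integral_congr_ae (Filter.Eventually.of_forall fun y => ?_)
    simp only [gmF1', ContinuousLinearMap.smul_apply, smul_eq_mul, dotCLM_apply,
      dotProduct_single]
    ring
  have main : ∀ (x : Fin d → ℝ) (i j : Fin d),
      fderiv ℝ (fun y => fderiv ℝ (fun z => Real.log (gmP μ S z)) y (Pi.single j 1)) x
          (Pi.single i 1) =
        (S⁻¹ * (covM (gmTilt μ S x) * S⁻¹ - 1)) i j := by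
    intro x i j
    have hgcx : Continuous (gmG S x) := continuous_gmG S x
    have hI : ∀ f : (Fin d → ℝ) → ℝ, Continuous f →
        Integrable (fun y => f y * gmG S x y) μ :=
      fun f hf => integrable_cs hK hμK (hf.mul hgcx)
    have hac : ∀ k : Fin d, Continuous fun y : Fin d → ℝ => (S⁻¹ *ᵥ (x - y)) k :=
      fun k => (continuous_apply k).comp ((continuous_mulVecFun S⁻¹).comp
        (continuous_const.sub continuous_id))
    -- second level derivative facts
    have hdiff2 : ∀ x' y : Fin d → ℝ,
        HasFDerivAt (fun x' => -((S⁻¹ *ᵥ (x' - y)) j) * gmG S x' y) (gmF2' S j x' y) x' := by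
      intro x' y
      have hlin : HasFDerivAt (fun x' : Fin d → ℝ => (S⁻¹ *ᵥ (x' - y)) j)
          (dotCLM (S⁻¹ j)) x' := by
        have h2 := (dotCLM (S⁻¹ j)).hasFDerivAt.comp x' ((hasFDerivAt_id x').sub_const y)
        have heq : (fun x' : Fin d → ℝ => (S⁻¹ *ᵥ (x' - y)) j)
            = fun x' => dotCLM (S⁻¹ j) (x' - y) := by
          funext z; simp [dotCLM_apply, Matrix.mulVec, dotProduct]
        rw [heq]
        simpa only [ContinuousLinearMap.comp_id, Function.comp_def, id_eq] using h2
      exact hlin.neg.mul (hdiff1 x' y)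
    have hF2c : Continuous fun q : (Fin d → ℝ) × (Fin d → ℝ) => gmF2' S j q.1 q.2 := by
      simp only [gmF2']
      exact ((((continuous_apply j).comp ((continuous_mulVecFun S⁻¹).comp
        (continuous_fst.sub continuous_snd))).neg).smul hF1c).add
        ((continuous_gmG_pair S).smul continuous_const)
    have H2 := hasFDerivAt_integral_cs μ hK hμK
      (fun x' y => -((S⁻¹ *ᵥ (x' - y)) j) * gmG S x' y) (fun x' y => gmF2' S j x' y)
      (fun x' => (((continuous_apply j).comp ((continuous_mulVecFun S⁻¹).comp
        (continuous_const.sub continuous_id))).neg).mul (continuous_gmG S x'))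
      hF2c hdiff2 x
    -- rewrite the outer function
    have hout : (fun x' => fderiv ℝ (fun z => Real.log (gmP μ S z)) x' (Pi.single j 1))
        = fun x' => (∫ y, gmG S x' y ∂μ)⁻¹ * ∫ y, -((S⁻¹ *ᵥ (x' - y)) j) * gmG S x' y ∂μ :=
      funext fun x' => inner_eq j x'
    rw [hout]
    have hinv : HasFDerivAt (fun x' : Fin d → ℝ => (∫ y, gmG S x' y ∂μ)⁻¹)
        ((-((∫ y, gmG S x y ∂μ) ^ 2)⁻¹) • ∫ y, gmF1' S x y ∂μ) x :=
      (hasDerivAt_inv (hPne x)).comp_hasFDerivAt x (H1 x).1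
    have hq : HasFDerivAt (fun x' : Fin d → ℝ => ∫ y, -((S⁻¹ *ᵥ (x' - y)) j) * gmG S x' y ∂μ)
        (∫ y, gmF2' S j x y ∂μ) x := H2.1
    have hprod : HasFDerivAt
        (fun x' => (∫ y, gmG S x' y ∂μ)⁻¹ * ∫ y, -((S⁻¹ *ᵥ (x' - y)) j) * gmG S x' y ∂μ)
        ((∫ y, gmG S x y ∂μ)⁻¹ • (∫ y, gmF2' S j x y ∂μ) +
          (∫ y, -((S⁻¹ *ᵥ (x - y)) j) * gmG S x y ∂μ) •
            ((-((∫ y, gmG S x y ∂μ) ^ 2)⁻¹) • ∫ y, gmF1' S x y ∂μ)) x := hinv.mul hq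
    rw [hprod.fderiv, ContinuousLinearMap.add_apply]
    simp only [ContinuousLinearMap.smul_apply, smul_eq_mul]
    rw [ContinuousLinearMap.integral_apply H2.2, ContinuousLinearMap.integral_apply (H1 x).2]
    -- pointwise values of the integrands
    have hF2app : ∀ y, gmF2' S j x y (Pi.single i 1)
        = (S⁻¹ *ᵥ (x - y)) i * (S⁻¹ *ᵥ (x - y)) j * gmG S x y - S⁻¹ j i * gmG S x y := by
      intro y
      simp only [gmF2', gmF1', ContinuousLinearMap.add_apply, ContinuousLinearMap.smul_apply,
        ContinuousLinearMap.neg_apply, smul_eq_mul, dotCLM_apply, dotProduct_single]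
      ring
    have hF1app : ∀ y, gmF1' S x y (Pi.single i 1)
        = -((S⁻¹ *ᵥ (x - y)) i * gmG S x y) := by
      intro y
      simp only [gmF1', ContinuousLinearMap.smul_apply, smul_eq_mul, dotCLM_apply,
        dotProduct_single]
      ring
    have e1 : ∫ y, gmF2' S j x y (Pi.single i 1) ∂μ
        = (∫ y, (S⁻¹ *ᵥ (x - y)) i * (S⁻¹ *ᵥ (x - y)) j * gmG S x y ∂μ)
          - S⁻¹ i j * ∫ y, gmG S x y ∂μ := by
      rw [integral_congr_ae (Filter.Eventually.of_forall hF2app),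
        integral_sub (hI (fun y => (S⁻¹ *ᵥ (x - y)) i * (S⁻¹ *ᵥ (x - y)) j) ((hac i).mul (hac j))) (hI _ continuous_const),
        integral_const_mul, hsymm j i]
    have e2 : ∫ y, gmF1' S x y (Pi.single i 1) ∂μ
        = -(∫ y, (S⁻¹ *ᵥ (x - y)) i * gmG S x y ∂μ) := by
      rw [← integral_neg]
      exact integral_congr_ae (Filter.Eventually.of_forall hF1app)
    have e3 : ∫ y, -((S⁻¹ *ᵥ (x - y)) j) * gmG S x y ∂μ
        = -(∫ y, (S⁻¹ *ᵥ (x - y)) j * gmG S x y ∂μ) := by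
      rw [← integral_neg]
      exact integral_congr_ae (Filter.Eventually.of_forall fun y => by ring)
    -- expansion of the vector entries
    have hmv : ∀ (k : Fin d) (y : Fin d → ℝ),
        (S⁻¹ *ᵥ (x - y)) k = ∑ m, S⁻¹ k m * (x m - y m) := by
      intro k y; simp [Matrix.mulVec, dotProduct]
    have eE : ∀ k : Fin d, ∫ y, (S⁻¹ *ᵥ (x - y)) k * gmG S x y ∂μ
        = ∑ m, S⁻¹ k m * (x m * (∫ y, gmG S x y ∂μ) - ∫ y, y m * gmG S x y ∂μ) := by
      intro k
      have step : ∫ y, (S⁻¹ *ᵥ (x - y)) k * gmG S x y ∂μ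
          = ∫ y, ∑ m, S⁻¹ k m * ((x m - y m) * gmG S x y) ∂μ := by
        refine integral_congr_ae (Filter.Eventually.of_forall fun y => ?_)
        beta_reduce
        rw [hmv k y, Finset.sum_mul]
        exact Finset.sum_congr rfl fun m _ => by ring
      rw [step, integral_finset_sum (f := fun m y => S⁻¹ k m * ((x m - y m) * gmG S x y)) _ (fun m _ =>
        ((hI _ (continuous_const.sub (continuous_apply m))).const_mul _))]
      refine Finset.sum_congr rfl fun m _ => ?_
      rw [integral_const_mul]
      congr 1
      have step2 : ∫ y, (x m - y m) * gmG S x y ∂μ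
          = ∫ y, (x m * gmG S x y - y m * gmG S x y) ∂μ :=
        integral_congr_ae (Filter.Eventually.of_forall fun y => by ring)
      rw [step2, integral_sub (hI _ continuous_const) (hI _ (continuous_apply m)),
        integral_const_mul]
    have eEij : ∫ y, (S⁻¹ *ᵥ (x - y)) i * (S⁻¹ *ᵥ (x - y)) j * gmG S x y ∂μ
        = ∑ m, ∑ l, S⁻¹ i m * S⁻¹ j l *
            (∫ y, (x m - y m) * (x l - y l) * gmG S x y ∂μ) := by
      have step : ∫ y, (S⁻¹ *ᵥ (x - y)) i * (S⁻¹ *ᵥ (x - y)) j * gmG S x y ∂μ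
          = ∫ y, ∑ m, ∑ l, S⁻¹ i m * S⁻¹ j l *
              ((x m - y m) * (x l - y l) * gmG S x y) ∂μ := by
        refine integral_congr_ae (Filter.Eventually.of_forall fun y => ?_)
        beta_reduce
        rw [hmv i y, hmv j y, Finset.sum_mul_sum]
        simp only [Finset.sum_mul]
        exact Finset.sum_congr rfl fun m _ => Finset.sum_congr rfl fun l _ => by ring
      have hint : ∀ m l : Fin d, Integrable
          (fun y : Fin d → ℝ => S⁻¹ i m * S⁻¹ j l *
            ((x m - y m) * (x l - y l) * gmG S x y)) μ := by
        intro m l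
        have := (hI (fun y => (x m - y m) * (x l - y l))
          ((continuous_const.sub (continuous_apply m)).mul
            (continuous_const.sub (continuous_apply l)))).const_mul (S⁻¹ i m * S⁻¹ j l)
        refine this.congr (Filter.Eventually.of_forall fun y => by ring)
      rw [step, integral_finset_sum _ (fun m _ => integrable_finset_sum _
        (fun l _ => hint m l))]
      refine Finset.sum_congr rfl fun m _ => ?_
      rw [integral_finset_sum _ (fun l _ => hint m l)]
      refine Finset.sum_congr rfl fun l _ => ?_
      rw [integral_const_mul]
    have hB : ∀ m l : Fin d, ∫ y, (x m - y m) * (x l - y l) * gmG S x y ∂μ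
        = x m * x l * (∫ y, gmG S x y ∂μ) - x m * (∫ y, y l * gmG S x y ∂μ)
          - x l * (∫ y, y m * gmG S x y ∂μ) + ∫ y, y m * y l * gmG S x y ∂μ := by
      intro m l
      have h1 : Integrable (fun y : Fin d → ℝ => x m * x l * gmG S x y) μ :=
        hI _ continuous_const
      have h2 : Integrable (fun y : Fin d → ℝ => x m * (y l * gmG S x y)) μ :=
        (hI _ (continuous_apply l)).const_mul _
      have h3 : Integrable (fun y : Fin d → ℝ => x l * (y m * gmG S x y)) μ :=
        (hI _ (continuous_apply m)).const_mul _
      have h4 : Integrable (fun y : Fin d → ℝ => y m * y l * gmG S x y) μ :=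
        hI _ ((continuous_apply m).mul (continuous_apply l))
      have step : ∫ y, (x m - y m) * (x l - y l) * gmG S x y ∂μ
          = ∫ y, (x m * x l * gmG S x y - x m * (y l * gmG S x y)
              - x l * (y m * gmG S x y) + y m * y l * gmG S x y) ∂μ :=
        integral_congr_ae (Filter.Eventually.of_forall fun y => by ring)
      have h12 : Integrable (fun y : Fin d → ℝ =>
          x m * x l * gmG S x y - x m * (y l * gmG S x y)) μ := h1.sub h2
      have h123 : Integrable (fun y : Fin d → ℝ =>
          x m * x l * gmG S x y - x m * (y l * gmG S x y) - x l * (y m * gmG S x y)) μ :=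
        h12.sub h3
      rw [step, integral_add h123 h4, integral_sub h12 h3,
        integral_sub h1 h2, integral_const_mul, integral_const_mul, integral_const_mul]
    -- covariance entries of the tilted measure
    have hcov : ∀ m l : Fin d, covE (gmTilt μ S x) m l
        = (∫ y, gmG S x y ∂μ)⁻¹ * (∫ y, y m * y l * gmG S x y ∂μ)
          - (∫ y, gmG S x y ∂μ)⁻¹ * (∫ y, y m * gmG S x y ∂μ) *
            ((∫ y, gmG S x y ∂μ)⁻¹ * (∫ y, y l * gmG S x y ∂μ)) := by
      intro m l
      have t1 := tilt_integral μ hK hμK S x (fun y => y m * y l)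
        ((continuous_apply m).mul (continuous_apply l))
      have t2 := tilt_integral μ hK hμK S x (fun y => y m) (continuous_apply m)
      have t3 := tilt_integral μ hK hμK S x (fun y => y l) (continuous_apply l)
      simp only [covE]
      rw [t1, t2, t3, gmP_eq]
    -- right-hand side expansion
    have eR : (S⁻¹ * (covM (gmTilt μ S x) * S⁻¹ - 1)) i j
        = (∑ m, ∑ l, S⁻¹ i m *
            ((∫ y, gmG S x y ∂μ)⁻¹ * (∫ y, y m * y l * gmG S x y ∂μ)
              - (∫ y, gmG S x y ∂μ)⁻¹ * (∫ y, y m * gmG S x y ∂μ) *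
                ((∫ y, gmG S x y ∂μ)⁻¹ * (∫ y, y l * gmG S x y ∂μ))) * S⁻¹ j l)
          - S⁻¹ i j := by
      rw [Matrix.mul_sub, Matrix.mul_one, Matrix.sub_apply, ← Matrix.mul_assoc]
      congr 1
      simp only [Matrix.mul_apply, Finset.sum_mul]
      rw [Finset.sum_comm]
      refine Finset.sum_congr rfl fun m _ => Finset.sum_congr rfl fun l _ => ?_
      rw [show covM (gmTilt μ S x) m l = covE (gmTilt μ S x) m l from rfl,
        hcov m l, hsymm l j]
    rw [e1, e2, e3, eEij, eE i, eE j, eR]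
    exact final_combine (∫ y, gmG S x y ∂μ) (hPne x) (fun m => S⁻¹ i m)
      (fun l => S⁻¹ j l) x (fun k => ∫ y, y k * gmG S x y ∂μ) (S⁻¹ i j)
      (fun m l => ∫ y, (x m - y m) * (x l - y l) * gmG S x y ∂μ)
      (fun m l => ∫ y, y m * y l * gmG S x y ∂μ) hB
  refine ⟨main, fun δ hδ hSδ x i j => ?_⟩
  rw [main x i j]
  have hinvS : S⁻¹ = δ⁻¹ • (1 : Matrix (Fin d) (Fin d) ℝ) := by
    rw [hSδ]
    refine Matrix.inv_eq_right_inv ?_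
    rw [Matrix.smul_mul, Matrix.mul_smul, Matrix.one_mul, smul_smul,
      mul_inv_cancel₀ hδ.ne', one_smul]
  rw [hinvS, Matrix.smul_mul, Matrix.one_mul, Matrix.mul_smul, Matrix.mul_one]
  simp only [Matrix.smul_apply, Matrix.sub_apply, smul_eq_mul, Matrix.one_apply,
    show ∀ a b : Fin d, covM (gmTilt μ S x) a b = covE (gmTilt μ S x) a b from fun a b => rfl]
  split_ifs with h <;> ring
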